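/- Let q = 3^n for some n ≥ 1 and let G be a tree in which every vertex has degree 3. If φ and ψ are F_q-valued holomorphic functions on G that agree at two adjacent vertices e₀ ~ e₁ (φ(e₀) = ψ(e₀) and φ(e₁) = ψ(e₁)), then φ = ψ. In particular, there are at most q² distinct F_q-valued holomorphic functions on G. -/
import Mathlib


/-- The Laplacian-based notion of a harmonic function on a locally finite simple graph. -/
def SimpleGraph.IsHarmonic {V R : Type*} [CommRing R] (G : SimpleGraph V)
    [G.LocallyFinite] (f : V → R) : Prop :=
  ∀ x : V, ∑ y ∈ G.neighborFinset x, (f y - f x) = 0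

/-- A function is holomorphic if both it and its square are harmonic. -/
def SimpleGraph.IsHolomorphic {V R : Type*} [CommRing R] (G : SimpleGraph V)
    [G.LocallyFinite] (f : V → R) : Prop :=
  G.IsHarmonic f ∧ G.IsHarmonic (fun x => (f x) ^ 2)

lemma three_eq_zero_aux {F : Type*} [Field F] [Fintype F] (n : ℕ) (hn : 1 ≤ n)
    (hcard : Fintype.card F = 3 ^ n) : (3 : F) = 0 := by
  have h := FiniteField.cast_card_eq_zero F
  rw [hcard] at h
  push_cast at h
  exact pow_eq_zero_iff (by omega) |>.mp h

lemma char3_two_eq {F : Type*} [Field F] (h3 : (3 : F) = 0)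
    {A B C : F} (hs : A + B + C = 0) (hq : A ^ 2 + B ^ 2 + C ^ 2 = 0) : A = B := by
  have h : (A - B) ^ 2 = 0 := by
    linear_combination 2 * hq + (C - A - B) * hs - C ^ 2 * h3
  have := pow_eq_zero_iff (n := 2) (by norm_num) |>.mp h
  exact sub_eq_zero.mp this

/-- In char 3, a holomorphic function on a 3-regular graph is constant on each
neighborhood. -/
lemma holo_nbr_const {V : Type*} (G : SimpleGraph V) [G.LocallyFinite]
    (hdeg : ∀ v : V, G.degree v = 3) {F : Type*} [Field F] (h3 : (3 : F) = 0)
    (f : V → F) (hf : G.IsHolomorphic f) :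
    ∀ x y z, G.Adj x y → G.Adj x z → f y = f z := by
  classical
  intro x y z hy hz
  have hcard : (G.neighborFinset x).card = 3 := hdeg x
  obtain ⟨a, b, c, hab, hac, hbc, hs⟩ := Finset.card_eq_three.mp hcard
  have hsum0 : f a + (f b + f c) - 3 * f x = 0 := by
    have h := hf.1 x
    rw [hs] at h
    simpa [Finset.sum_insert, Finset.mem_insert, hab, hac, hbc] using h
  have hsq0 : f a ^ 2 + (f b ^ 2 + f c ^ 2) - 3 * f x ^ 2 = 0 := by
    have h := hf.2 x
    rw [hs] at h
    simpa [Finset.sum_insert, Finset.mem_insert, hab, hac, hbc] using h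
  have hsum : f a + f b + f c = 0 := by linear_combination hsum0 + f x * h3
  have hsq : f a ^ 2 + f b ^ 2 + f c ^ 2 = 0 := by
    linear_combination hsq0 + f x ^ 2 * h3
  have fab : f a = f b := char3_two_eq h3 hsum hsq
  have hsum' : f a + f c + f b = 0 := by linear_combination hsum
  have hsq' : f a ^ 2 + f c ^ 2 + f b ^ 2 = 0 := by linear_combination hsq
  have fac : f a = f c := char3_two_eq h3 hsum' hsq'
  have hy' : y ∈ ({a, b, c} : Finset V) := by rw [← hs]; simpa using hy
  have hz' : z ∈ ({a, b, c} : Finset V) := by rw [← hs]; simpa using hz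
  simp only [Finset.mem_insert, Finset.mem_singleton] at hy' hz'
  rcases hy' with rfl | rfl | rfl <;> rcases hz' with rfl | rfl | rfl <;>
    simp_all

/-- Uniqueness of holomorphic functions given values at two adjacent vertices. -/
lemma holo_unique {V : Type*} (G : SimpleGraph V) [G.LocallyFinite]
    (hconn : G.Connected) (hdeg : ∀ v : V, G.degree v = 3)
    {F : Type*} [Field F] (h3 : (3 : F) = 0)
    (φ ψ : V → F) (hφ : G.IsHolomorphic φ) (hψ : G.IsHolomorphic ψ)
    (e₀ e₁ : V) (hadj : G.Adj e₀ e₁) (h0 : φ e₀ = ψ e₀) (h1 : φ e₁ = ψ e₁) :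
    φ = ψ := by
  set S : V → Prop := fun v => φ v = ψ v ∧ ∀ y, G.Adj v y → φ y = ψ y with hS
  have base : S e₀ := by
    refine ⟨h0, fun y hy => ?_⟩
    rw [holo_nbr_const G hdeg h3 φ hφ e₀ y e₁ hy hadj, h1,
        ← holo_nbr_const G hdeg h3 ψ hψ e₀ y e₁ hy hadj]
  have step : ∀ u w, G.Adj u w → S u → S w := by
    intro u w hw hu
    refine ⟨hu.2 w hw, fun y hy => ?_⟩
    rw [holo_nbr_const G hdeg h3 φ hφ w y u hy hw.symm, hu.1,
        ← holo_nbr_const G hdeg h3 ψ hψ w y u hy hw.symm]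
  have prop : ∀ (u v : V) (_ : G.Walk u v), S u → S v := by
    intro u v p
    induction p with
    | nil => exact id
    | cons h p ih => intro hu; exact ih (step _ _ h hu)
  funext v
  exact (prop e₀ v (hconn.preconnected e₀ v).some base).1

/-- on a tree in which every vertex has degree 3, two `F_{3^n}`-valued
holomorphic functions agreeing at two adjacent vertices are equal; in particular there
are at most `q²` holomorphic functions (`q = 3^n`). -/
theorem holomorphic_eq_of_agree_adjacent_deg_three
    {V : Type*} (G : SimpleGraph V) [G.LocallyFinite]
    (htree : G.IsTree) (hdeg : ∀ v : V, G.degree v = 3)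
    {F : Type*} [Field F] [Fintype F] (n : ℕ) (hn : 1 ≤ n)
    (hcard : Fintype.card F = 3 ^ n)
    (φ ψ : V → F) (hφ : G.IsHolomorphic φ) (hψ : G.IsHolomorphic ψ)
    (e₀ e₁ : V) (hadj : G.Adj e₀ e₁) (h0 : φ e₀ = ψ e₀) (h1 : φ e₁ = ψ e₁) :
    φ = ψ ∧ Nat.card {f : V → F // G.IsHolomorphic f} ≤ (Fintype.card F) ^ 2 := by
  have h3 : (3 : F) = 0 := three_eq_zero_aux n hn hcard
  have hconn := htree.isConnected
  refine ⟨holo_unique G hconn hdeg h3 φ ψ hφ hψ e₀ e₁ hadj h0 h1, ?_⟩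
  have hinj : Function.Injective
      (fun f : {f : V → F // G.IsHolomorphic f} => (f.1 e₀, f.1 e₁)) := by
    intro f g hfg
    simp only [Prod.mk.injEq] at hfg
    exact Subtype.ext
      (holo_unique G hconn hdeg h3 f.1 g.1 f.2 g.2 e₀ e₁ hadj hfg.1 hfg.2)
  calc Nat.card {f : V → F // G.IsHolomorphic f} ≤ Nat.card (F × F) :=
        Nat.card_le_card_of_injective _ hinj
    _ = (Fintype.card F) ^ 2 := by
        simp [Nat.card_eq_fintype_card, Fintype.card_prod, sq]
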